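/- Let f be defined on a subset X of a finite Boolean algebra B with atoms a_1,…,a_k. Then f extends to a normalized measure on B if and only if there exist λ_1,…,λ_k ≥ 0 with Σ λ_i = 1 such that f = Σ λ_i (δ_{a_i})|_X, i.e. f is the restriction to X of a convex combination of the two-valued measures of B. -/

import Mathlib

def IsNormMeasure {B : Type*} [BooleanAlgebra B] (m : B → ℝ) : Prop :=
  (∀ x, 0 ≤ m x) ∧ (∀ x y : B, x ⊓ y = ⊥ → m (x ⊔ y) = m x + m y) ∧ m ⊤ = 1

open Classical in
noncomputable def delta {B : Type*} [BooleanAlgebra B] (a x : B) : ℝ :=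
  if a ≤ x then 1 else 0

open Classical

lemma delta_nonneg {B : Type*} [BooleanAlgebra B] (a x : B) : 0 ≤ delta a x := by
  unfold delta; split <;> norm_num

lemma delta_add {B : Type*} [BooleanAlgebra B] {a : B} (ha : IsAtom a)
    {x y : B} (h : x ⊓ y = ⊥) : delta a (x ⊔ y) = delta a x + delta a y := by
  unfold delta
  by_cases hx : a ≤ x
  · have hy : ¬ a ≤ y := fun hy => ha.1 (le_bot_iff.mp (h ▸ le_inf hx hy))
    simp [hx, hy, le_sup_of_le_left hx]
  · by_cases hy : a ≤ y
    · simp [hx, hy, le_sup_of_le_right hy]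
    · have hxy : ¬ a ≤ x ⊔ y := by
        intro hle
        have hrepr : a = (a ⊓ x) ⊔ (a ⊓ y) := by
          rw [← inf_sup_left, inf_eq_left.mpr hle]
        have h1 : a ⊓ x = ⊥ := by
          rcases ha.le_iff.mp (inf_le_left : a ⊓ x ≤ a) with h' | h'
          · exact h'
          · exact absurd (inf_eq_left.mp h') hx
        have h2 : a ⊓ y = ⊥ := by
          rcases ha.le_iff.mp (inf_le_left : a ⊓ y ≤ a) with h' | h'
          · exact h'
          · exact absurd (inf_eq_left.mp h') hy
        exact ha.1 (by rw [hrepr, h1, h2, sup_idem])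
      simp [hx, hy, hxy]

lemma measure_repr {B : Type*} [BooleanAlgebra B] [Fintype B] (m : B → ℝ)
    (hadd : ∀ x y : B, x ⊓ y = ⊥ → m (x ⊔ y) = m x + m y) :
    ∀ x : B, m x = ∑ a : {a : B // IsAtom a}, m a.1 * delta a.1 x := by
  have hbot : m ⊥ = 0 := by
    have := hadd ⊥ ⊥ (by simp)
    simp at this
    linarith
  intro x
  induction x using WellFoundedLT.induction with
  | _ x ih =>
    rcases eq_bot_or_exists_atom_le x with rfl | ⟨a, ha, hax⟩
    · rw [hbot]
      symm
      apply Finset.sum_eq_zero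
      intro b _
      have : ¬ b.1 ≤ ⊥ := by simpa [le_bot_iff] using b.2.1
      simp [delta, this]
    · have hane : a ≠ ⊥ := ha.1
      have hlt : x \ a < x := sdiff_lt hax hane
      have hsplit : a ⊔ x \ a = x := by
        rw [sup_comm]; exact sdiff_sup_cancel hax
      have hdisj : a ⊓ (x \ a) = ⊥ := inf_sdiff_self_right
      have h1 : m x = m a + m (x \ a) := by
        rw [← hadd a (x \ a) hdisj, hsplit]
      set A : {a : B // IsAtom a} := ⟨a, ha⟩ with hA
      have hna : ¬ a ≤ x \ a := by
        intro hle
        exact hane (le_bot_iff.mp (hdisj ▸ le_inf le_rfl hle))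
      have hterm : ∀ b : {a : B // IsAtom a}, b ≠ A →
          delta b.1 x = delta b.1 (x \ a) := by
        intro b hb
        unfold delta
        by_cases hbx : b.1 ≤ x
        · have hba : b.1 ⊓ a = ⊥ := by
            rcases ha.le_iff.mp (inf_le_right : b.1 ⊓ a ≤ a) with h' | h'
            · exact h'
            · exfalso
              apply hb
              have hab : a ≤ b.1 := h' ▸ inf_le_left
              have : a = b.1 := ((b.2.le_iff.mp hab).resolve_left hane)
              exact Subtype.ext this.symm
          have : b.1 ≤ x \ a := by
            rw [sdiff_eq]
            exact le_inf hbx (Disjoint.le_compl_right (disjoint_iff.mpr hba))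
          simp [hbx, this]
        · have : ¬ b.1 ≤ x \ a := fun h' => hbx (h'.trans sdiff_le)
          simp [hbx, this]
      have e1 : ∑ b : {a : B // IsAtom a}, m b.1 * delta b.1 x
          = m a + ∑ b ∈ Finset.univ.erase A, m b.1 * delta b.1 x := by
        rw [← Finset.add_sum_erase _ _ (Finset.mem_univ A)]
        simp [delta, hax, hA]
      have e2 : ∑ b : {a : B // IsAtom a}, m b.1 * delta b.1 (x \ a)
          = ∑ b ∈ Finset.univ.erase A, m b.1 * delta b.1 (x \ a) := by
        rw [← Finset.add_sum_erase _ _ (Finset.mem_univ A)]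
        simp [delta, hna, hA]
      have e3 : ∑ b ∈ Finset.univ.erase A, m b.1 * delta b.1 (x \ a)
          = ∑ b ∈ Finset.univ.erase A, m b.1 * delta b.1 x := by
        apply Finset.sum_congr rfl
        intro b hb
        rw [hterm b (Finset.ne_of_mem_erase hb)]
      rw [e1, h1, ih _ hlt, e2, e3]

open Classical in
/-- A function `f` on a subset `X` of a finite Boolean algebra extends to a normalized
measure on the whole algebra iff on `X` it agrees with a convex combination of the
two-valued measures `δ_a` associated to the atoms. -/
theorem stmt14 (B : Type*) [BooleanAlgebra B] [Fintype B] (X : Set B) (f : B → ℝ) :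
    (∃ μ : B → ℝ, IsNormMeasure μ ∧ ∀ x ∈ X, μ x = f x) ↔
    (∃ lam : {a : B // IsAtom a} → ℝ,
      (∀ a, 0 ≤ lam a) ∧ (∑ a, lam a) = 1 ∧
      ∀ x ∈ X, f x = ∑ a, lam a * delta a.1 x) := by
  constructor
  · rintro ⟨μ, ⟨hpos, hadd, htop⟩, hX⟩
    refine ⟨fun a => μ a.1, fun a => hpos a.1, ?_, ?_⟩
    · have := measure_repr μ hadd ⊤
      simp [delta, le_top] at this
      rw [← htop, this]
    · intro x hx
      rw [← hX x hx, measure_repr μ hadd x]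
  · rintro ⟨lam, hpos, hsum, hf⟩
    refine ⟨fun x => ∑ a, lam a * delta a.1 x, ⟨?_, ?_, ?_⟩, ?_⟩
    · intro x
      exact Finset.sum_nonneg fun a _ => mul_nonneg (hpos a) (delta_nonneg _ _)
    · intro x y hxy
      rw [← Finset.sum_add_distrib]
      apply Finset.sum_congr rfl
      intro a _
      rw [delta_add a.2 hxy, mul_add]
    · simp only [delta, le_top, if_true, mul_one]
      exact hsum
    · intro x hx
      exact (hf x hx).symm
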